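/- Fix positive integers n ≥ k > t. Let A ⊆ [0,1]^n be such that every element of A has exactly k strictly positive coordinates, and for every x, y ∈ A there exist t distinct indices i_1,...,i_t with x_{i_j} = y_{i_j} > 0 for all j. Then the Hausdorff dimension of A is at most k - t. -/

import Mathlib

open MeasureTheory
open scoped ENNReal

lemma aux_dimH_fix (n : ℕ) (c : EuclideanSpace ℝ (Fin n)) (u : Finset (Fin n)) :
    dimH {y : EuclideanSpace ℝ (Fin n) | ∀ i ∉ u, y i = c i} ≤ (u.card : ℝ≥0∞) := by
  classical
  set g : EuclideanSpace ℝ {i : Fin n // i ∈ u} → EuclideanSpace ℝ (Fin n) :=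
    fun z => WithLp.toLp 2 (fun i => if h : i ∈ u then z ⟨i, h⟩ else c i)
  have hsub : {y : EuclideanSpace ℝ (Fin n) | ∀ i ∉ u, y i = c i} ⊆ Set.range g := by
    intro y hy
    refine ⟨WithLp.toLp 2 (fun j => y j.1), ?_⟩
    ext i
    by_cases h : i ∈ u
    · simp [g, h]
    · simp [g, h, hy i h]
  have hlip : LipschitzWith 1 g := by
    apply LipschitzWith.of_dist_le_mul
    intro z z'
    rw [NNReal.coe_one, one_mul, EuclideanSpace.dist_eq, EuclideanSpace.dist_eq]
    apply Real.sqrt_le_sqrt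
    have h1 : ∀ i ∈ (Finset.univ : Finset (Fin n)), i ∉ u →
        dist (g z i) (g z' i) ^ 2 = 0 := by
      intro i _ h
      simp [g, h]
    rw [← Finset.sum_subset u.subset_univ h1, ← Finset.sum_attach u
      (fun i => dist (g z i) (g z' i) ^ 2)]
    rw [← Finset.univ_eq_attach]
    apply le_of_eq
    apply Finset.sum_congr rfl
    intro j _
    simp [g, j.2]
  calc dimH {y : EuclideanSpace ℝ (Fin n) | ∀ i ∉ u, y i = c i}
      ≤ dimH (Set.range g) := dimH_mono hsub
    _ ≤ dimH (Set.univ : Set (EuclideanSpace ℝ {i : Fin n // i ∈ u})) := hlip.dimH_range_le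
    _ = (u.card : ℝ≥0∞) := by
        rw [Real.dimH_univ_eq_finrank, finrank_euclideanSpace, Fintype.card_coe]

theorem stmt_17 (n k t : ℕ) (ht : 1 ≤ t) (hkt : t < k) (hkn : k ≤ n)
    (A : Set (EuclideanSpace ℝ (Fin n)))
    (hAcube : ∀ x ∈ A, ∀ i, x i ∈ Set.Icc (0 : ℝ) 1)
    (hsupp : ∀ x ∈ A, {i : Fin n | 0 < x i}.ncard = k)
    (hint : ∀ x ∈ A, ∀ y ∈ A, ∃ s : Finset (Fin n), s.card = t ∧
      ∀ i ∈ s, x i = y i ∧ 0 < x i) :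
    dimH A ≤ (k : ℝ≥0∞) - t := by
  classical
  rcases A.eq_empty_or_nonempty with hA | ⟨x₀, hx₀⟩
  · simp [hA]
  set c : Finset (Fin n) → EuclideanSpace ℝ (Fin n) :=
    fun s => WithLp.toLp 2 (fun i => if i ∈ s then x₀ i else 0)
  set V : Finset (Fin n) × Finset (Fin n) → Set (EuclideanSpace ℝ (Fin n)) :=
    fun p => ⋃ _ : p.1 ⊆ p.2 ∧ p.1.card = t ∧ p.2.card = k,
      {y : EuclideanSpace ℝ (Fin n) | ∀ i ∉ p.2 \ p.1, y i = c p.1 i}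
  have hcover : A ⊆ ⋃ p, V p := by
    intro y hy
    obtain ⟨s, hst, hs⟩ := hint x₀ hx₀ y hy
    set S : Finset (Fin n) := Finset.univ.filter (fun i => 0 < y i) with hS
    have hScard : S.card = k := by
      have h1 : {i : Fin n | 0 < y i} = ↑S := by ext i; simp [hS]
      have := hsupp y hy
      rwa [h1, Set.ncard_coe_finset] at this
    have hsS : s ⊆ S := by
      intro i hi
      have := hs i hi
      simp only [hS, Finset.mem_filter, Finset.mem_univ, true_and]
      rw [← this.1]; exact this.2
    refine Set.mem_iUnion.2 ⟨(s, S), ?_⟩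
    refine Set.mem_iUnion.2 ⟨⟨hsS, hst, hScard⟩, ?_⟩
    intro i hiu
    by_cases hi : i ∈ s
    · simp only [c, WithLp.ofLp_toLp, if_pos hi]
      exact (hs i hi).1.symm
    · simp only [c, WithLp.ofLp_toLp, if_neg hi]
      have hiS : i ∉ S := fun h => hiu (Finset.mem_sdiff.2 ⟨h, hi⟩)
      have : ¬ 0 < y i := by simpa [hS] using hiS
      have h0 := (hAcube y hy i).1
      linarith
  refine (dimH_mono hcover).trans ?_
  rw [dimH_iUnion]
  refine iSup_le fun p => ?_
  simp only [V]
  rw [dimH_iUnion]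
  refine iSup_le fun hp => ?_
  refine (aux_dimH_fix n (c p.1) (p.2 \ p.1)).trans ?_
  rw [Finset.card_sdiff_of_subset hp.1, hp.2.1, hp.2.2]
  rw [ENNReal.natCast_sub]
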